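/- Let Λ be an m×m real matrix with λ_{i,j} ≥ 0 for i ≠ j and λ_{i,i} = −Σ_{j≠i} λ_{i,j} (each row sums to zero), with rank Λ = m−1, and let p be a stationary probability vector (p_i ≥ 0, Σ_i p_i = 1, pᵀΛ = 0). Then for every z ∈ ℝ^m the linear system Λb = (pᵀz)𝟙 − z, where 𝟙 = (1,…,1)ᵀ, has a solution b ∈ ℝ^m. -/
import Mathlib

/-- The linear functional `w ↦ p ⬝ᵥ w`. -/
def dotL (m : ℕ) (p : Fin m → ℝ) : (Fin m → ℝ) →ₗ[ℝ] ℝ where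
  toFun w := dotProduct p w
  map_add' x y := dotProduct_add p x y
  map_smul' c x := dotProduct_smul c p x

open Matrix Finset in
/-- For an ergodic CTMC generator `Λ` (off-diagonal entries nonnegative, rows
summing to zero, rank `m - 1`) with stationary probability vector `p`, for every `z ∈ ℝ^m`
the linear system `Λ b = (pᵀz) 𝟙 - z` has a solution. -/
theorem stmt5 (m : ℕ) (Λ : Matrix (Fin m) (Fin m) ℝ)
    (hoff : ∀ i j : Fin m, i ≠ j → 0 ≤ Λ i j)
    (hdiag : ∀ i : Fin m, Λ i i = -∑ j ∈ univ \ {i}, Λ i j)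
    (hrank : Λ.rank = m - 1)
    (p : Fin m → ℝ) (hp0 : ∀ i, 0 ≤ p i) (hp1 : ∑ i, p i = 1)
    (hstat : p ᵥ* Λ = 0) :
    ∀ z : Fin m → ℝ, ∃ b : Fin m → ℝ,
      Λ *ᵥ b = (p ⬝ᵥ z) • (1 : Fin m → ℝ) - z := by
  intro z
  have hm : m ≠ 0 := by rintro rfl; simp at hp1
  set f := dotL m p with hf
  have h1 : f (1 : Fin m → ℝ) = 1 := by
    simp [hf, dotL, dotProduct, hp1]
  have hle : LinearMap.range Λ.mulVecLin ≤ LinearMap.ker f := by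
    rintro w ⟨b, rfl⟩
    show p ⬝ᵥ (Λ *ᵥ b) = 0
    rw [Matrix.dotProduct_mulVec, hstat, zero_dotProduct]
  have hrangef : LinearMap.range f = ⊤ := by
    rw [LinearMap.range_eq_top]
    intro c
    exact ⟨c • (1 : Fin m → ℝ), by rw [_root_.map_smul, h1, smul_eq_mul, mul_one]⟩
  have hkerdim : Module.finrank ℝ (LinearMap.ker f) = m - 1 := by
    have h := LinearMap.finrank_range_add_finrank_ker f
    rw [hrangef, finrank_top, Module.finrank_self] at h
    have hpi : Module.finrank ℝ (Fin m → ℝ) = m := by simp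
    omega
  have heq : LinearMap.range Λ.mulVecLin = LinearMap.ker f :=
    Submodule.eq_of_le_of_finrank_eq hle (by rw [hkerdim]; exact hrank)
  have hw : ((p ⬝ᵥ z) • (1 : Fin m → ℝ) - z) ∈ LinearMap.ker f := by
    rw [LinearMap.mem_ker, map_sub, _root_.map_smul, h1, smul_eq_mul, mul_one]
    show p ⬝ᵥ z - p ⬝ᵥ z = 0
    ring
  rw [← heq] at hw
  obtain ⟨b, hb⟩ := hw
  exact ⟨b, hb⟩
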